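/- Let j1, j2, j3, j4 be integers with j1 = -1, j1 + j2 - j3 - j4 = 2, and j1² + j2² - j3² - j4² = 0. Then (j1, j2, j3, j4) is one of (-1,1,-1,-1), (-1,2,-2,1), (-1,2,1,-2), (-1,-8,-4,-7), (-1,-8,-7,-4), (-1,-7,-5,-5). -/

import Mathlib

theorem stmt2 (j1 j2 j3 j4 : ℤ) (h1 : j1 = -1)
    (hmom : j1 + j2 - j3 - j4 = 2) (hres : j1^2 + j2^2 - j3^2 - j4^2 = 0) :
    (j1, j2, j3, j4) = (-1, 1, -1, -1) ∨ (j1, j2, j3, j4) = (-1, 2, -2, 1) ∨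
    (j1, j2, j3, j4) = (-1, 2, 1, -2) ∨ (j1, j2, j3, j4) = (-1, -8, -4, -7) ∨
    (j1, j2, j3, j4) = (-1, -8, -7, -4) ∨ (j1, j2, j3, j4) = (-1, -7, -5, -5) := by
  subst h1
  have key : (j3 + 3) * (j4 + 3) = 4 := by nlinarith [sq_nonneg (j3+j4)]
  have hd : (j3 + 3) ∣ 4 := ⟨j4 + 3, key.symm⟩
  have hb := Int.le_of_dvd (by norm_num) hd
  have hb2 := Int.le_of_dvd (by norm_num) hd.neg_left
  have hj3 : -7 ≤ j3 ∧ j3 ≤ 1 := by omega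
  obtain ⟨hl, hr⟩ := hj3
  interval_cases j3 <;> · simp only [Prod.mk.injEq]; norm_num at key <;> norm_num at ⊢; try omega
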